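/- Let W = span{I ⊗ W₁ + W₂ ⊗ I : W₁, W₂ ∈ ℝ^{q×q}} ⊆ L(ℝ^{q×q}) (Kronecker products acting on q×q matrices). Then for any linear operator E on ℝ^{q×q}, there exist matrices E_L, E_R ∈ ℝ^{q×q} such that the orthogonal projection of E onto W equals I ⊗ E_L + E_R ⊗ I, with ‖E_L‖_F ≤ ‖E‖/√q and ‖E_R‖_F ≤ ‖E‖/√q, where ‖E‖ is the Euclidean (Hilbert–Schmidt) norm of E. -/

import Mathlib

open Matrix Finset

/-- The Hilbert–Schmidt inner product of two operators on `ℝ^{q×q}`, computed in the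
orthonormal basis of standard basis matrices (with the trace inner product on matrices). -/
noncomputable def hsInner (q : ℕ)
    (F G : Matrix (Fin q) (Fin q) ℝ → Matrix (Fin q) (Fin q) ℝ) : ℝ :=
  ∑ a : Fin q, ∑ b : Fin q,
    Matrix.trace ((F (Matrix.single a b 1))ᵀ * G (Matrix.single a b 1))

lemma trace_t_mul {q : ℕ} (M N : Matrix (Fin q) (Fin q) ℝ) :
    Matrix.trace (Mᵀ * N) = ∑ j, ∑ i, M i j * N i j := by
  simp [Matrix.trace, Matrix.diag, Matrix.mul_apply, Matrix.transpose_apply]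

lemma entryL {q : ℕ} (A : Matrix (Fin q) (Fin q) ℝ) (a b i j : Fin q) :
    (A * Matrix.single a b (1:ℝ) : Matrix (Fin q) (Fin q) ℝ) i j
      = if j = b then A i a else 0 := by
  split
  · subst_vars; simp
  · rw [Matrix.mul_single_apply_of_ne]; assumption

lemma entryR {q : ℕ} (M : Matrix (Fin q) (Fin q) ℝ) (a b i j : Fin q) :
    (Matrix.single a b (1:ℝ) * M : Matrix (Fin q) (Fin q) ℝ) i j
      = if i = a then M b j else 0 := by
  split
  · subst_vars; simp
  · rw [Matrix.single_mul_apply_of_ne]; assumption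

lemma hs_entry (q : ℕ) (F G : Matrix (Fin q) (Fin q) ℝ → Matrix (Fin q) (Fin q) ℝ) :
    hsInner q F G = ∑ a : Fin q, ∑ b : Fin q, ∑ j : Fin q, ∑ i : Fin q,
      F (Matrix.single a b 1) i j * G (Matrix.single a b 1) i j := by
  simp only [hsInner, trace_t_mul]

lemma hs_nonneg (q : ℕ) (F : Matrix (Fin q) (Fin q) ℝ → Matrix (Fin q) (Fin q) ℝ) :
    0 ≤ hsInner q F F := by
  rw [hs_entry]
  apply Finset.sum_nonneg; intro a _
  apply Finset.sum_nonneg; intro b _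
  apply Finset.sum_nonneg; intro j _
  apply Finset.sum_nonneg; intro i _
  exact mul_self_nonneg _

lemma trace_t_mul_self_nonneg {q : ℕ} (M : Matrix (Fin q) (Fin q) ℝ) :
    0 ≤ Matrix.trace (Mᵀ * M) := by
  rw [trace_t_mul]
  apply Finset.sum_nonneg; intro j _
  apply Finset.sum_nonneg; intro i _
  exact mul_self_nonneg _

lemma hs_expand (q : ℕ) (u v : Matrix (Fin q) (Fin q) ℝ → Matrix (Fin q) (Fin q) ℝ) :
    hsInner q u u = hsInner q (fun X => u X - v X) (fun X => u X - v X)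
      + 2 * hsInner q (fun X => u X - v X) v + hsInner q v v := by
  simp only [hs_entry, Matrix.sub_apply, Finset.mul_sum, ← Finset.sum_add_distrib]
  apply Finset.sum_congr rfl; intro a _
  apply Finset.sum_congr rfl; intro b _
  apply Finset.sum_congr rfl; intro j _
  apply Finset.sum_congr rfl; intro i _
  ring

lemma hs_rep (q : ℕ) (A B : Matrix (Fin q) (Fin q) ℝ) :
    hsInner q (fun X => A * X + X * Bᵀ) (fun X => A * X + X * Bᵀ)
      = q * Matrix.trace (Aᵀ * A) + q * Matrix.trace (Bᵀ * B)
        + 2 * (Matrix.trace A * Matrix.trace B) := by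
  simp only [hsInner, trace_t_mul, Matrix.add_apply, entryL, entryR, Matrix.transpose_apply]
  simp [add_mul, mul_add, ite_mul, mul_ite, mul_zero, zero_mul, Finset.sum_ite_eq,
    Finset.sum_ite_eq', Finset.mul_sum, Finset.sum_add_distrib, Matrix.trace, Matrix.diag,
    Matrix.mul_apply, Matrix.transpose_apply]
  simp only [mul_assoc, ← sq, ← Finset.sum_mul, ← Finset.mul_sum]
  ring

/-- Let `W = span{I ⊗ W₁ + W₂ ⊗ I}` (Kronecker products acting on `q×q` matrices by
`(A ⊗ B)(X) = B X Aᵀ`, so the elements of `W` act by `X ↦ W₁ X + X W₂ᵀ`).  If `P` is the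
orthogonal projection of a linear operator `E` onto `W`, then there exist `E_L, E_R` with
`P = I ⊗ E_L + E_R ⊗ I` and `‖E_L‖_F, ‖E_R‖_F ≤ ‖E‖/√q` (Hilbert–Schmidt norm of `E`). -/
theorem projection_onto_W_decomposition (q : ℕ) (hq : 0 < q)
    (E P : Matrix (Fin q) (Fin q) ℝ →ₗ[ℝ] Matrix (Fin q) (Fin q) ℝ)
    (hPmem : ∃ W₁ W₂ : Matrix (Fin q) (Fin q) ℝ, ∀ X, P X = W₁ * X + X * W₂ᵀ)
    (hPorth : ∀ W₁ W₂ : Matrix (Fin q) (Fin q) ℝ,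
      hsInner q (fun X => E X - P X) (fun X => W₁ * X + X * W₂ᵀ) = 0) :
    ∃ EL ER : Matrix (Fin q) (Fin q) ℝ,
      (∀ X, P X = EL * X + X * ERᵀ) ∧
      Real.sqrt (Matrix.trace (ELᵀ * EL)) ≤ Real.sqrt (hsInner q (⇑E) (⇑E)) / Real.sqrt q ∧
      Real.sqrt (Matrix.trace (ERᵀ * ER)) ≤ Real.sqrt (hsInner q (⇑E) (⇑E)) / Real.sqrt q := by
  obtain ⟨W₁, W₂, hW⟩ := hPmem
  have hq0 : (q : ℝ) ≠ 0 := Nat.cast_ne_zero.mpr hq.ne'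
  set c : ℝ := (Matrix.trace W₂ - Matrix.trace W₁) / (2 * q) with hc
  refine ⟨W₁ + c • (1 : Matrix (Fin q) (Fin q) ℝ), W₂ - c • (1 : Matrix (Fin q) (Fin q) ℝ), ?_⟩
  set EL := W₁ + c • (1 : Matrix (Fin q) (Fin q) ℝ) with hEL
  set ER := W₂ - c • (1 : Matrix (Fin q) (Fin q) ℝ) with hER
  have hP' : ∀ X, P X = EL * X + X * ERᵀ := by
    intro X
    rw [hW]
    simp only [hEL, hER, Matrix.add_mul, Matrix.transpose_sub, Matrix.transpose_smul,
      Matrix.transpose_one, Matrix.mul_sub, Matrix.smul_mul, Matrix.mul_smul,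
      Matrix.one_mul, Matrix.mul_one]
    abel
  have htr : Matrix.trace EL = Matrix.trace ER := by
    simp only [hEL, hER, Matrix.trace_add, Matrix.trace_sub, Matrix.trace_smul,
      Matrix.trace_one, smul_eq_mul, mul_comm]
    rw [hc]
    simp [Fintype.card_fin]
    field_simp
    ring
  -- Pythagoras
  have key := hs_expand q (⇑E) (fun X => EL * X + X * ERᵀ)
  have horth := hPorth EL ER
  have hdiff : (fun X => E X - (EL * X + X * ERᵀ))
      = (fun X => E X - P X) := by
    funext X; rw [hP' X]
  rw [hdiff] at key
  rw [horth] at key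
  have hPle : hsInner q (fun X => EL * X + X * ERᵀ) (fun X => EL * X + X * ERᵀ)
      ≤ hsInner q (⇑E) (⇑E) := by
    rw [key]
    have := hs_nonneg q (fun X => E X - P X)
    linarith
  rw [hs_rep q EL ER] at hPle
  have hxL : 0 ≤ Matrix.trace (ELᵀ * EL) := trace_t_mul_self_nonneg EL
  have hxR : 0 ≤ Matrix.trace (ERᵀ * ER) := trace_t_mul_self_nonneg ER
  have htrsq : 0 ≤ Matrix.trace EL * Matrix.trace ER := by
    rw [htr]; exact mul_self_nonneg _
  have hqpos : (0:ℝ) < q := by exact_mod_cast hq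
  have hE0 : 0 ≤ hsInner q (⇑E) (⇑E) := hs_nonneg q (⇑E)
  have boundL : Matrix.trace (ELᵀ * EL) ≤ hsInner q (⇑E) (⇑E) / q := by
    rw [le_div_iff₀ hqpos]
    nlinarith
  have boundR : Matrix.trace (ERᵀ * ER) ≤ hsInner q (⇑E) (⇑E) / q := by
    rw [le_div_iff₀ hqpos]
    nlinarith
  refine ⟨hP', ?_, ?_⟩
  · calc Real.sqrt (Matrix.trace (ELᵀ * EL)) ≤ Real.sqrt (hsInner q (⇑E) (⇑E) / q) :=
        Real.sqrt_le_sqrt boundL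
      _ = Real.sqrt (hsInner q (⇑E) (⇑E)) / Real.sqrt q := Real.sqrt_div hE0 q
  · calc Real.sqrt (Matrix.trace (ERᵀ * ER)) ≤ Real.sqrt (hsInner q (⇑E) (⇑E) / q) :=
        Real.sqrt_le_sqrt boundR
      _ = Real.sqrt (hsInner q (⇑E) (⇑E)) / Real.sqrt q := Real.sqrt_div hE0 q
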